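/- Let λ₁, λ₂ ∈ [0,1] with λ₁+λ₂ = 1. Then λ₁ − λ₂ ≠ 0 (equivalently λ₁ ≠ 1/2) if and only if the 2×2 left circulant matrix [[λ₁,λ₂],[λ₂,λ₁]] is invertible. Moreover, if I ⊆ ℝ is a nonempty open interval, λ₁ ≠ λ₂, and f : I → ℝ satisfies f((x₁+x₂)/2) ≤ (1/2)(f(λ₁x₁+λ₂x₂) + f(λ₂x₁+λ₁x₂)) for all x₁, x₂ ∈ I, then f is Jensen convex on I. -/
import Mathlib

/-- Doubling induction: midpoint convexity at scale `r` propagates to scale `2^n * r`. -/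
lemma key_ind_15 (f : ℝ → ℝ) (u v r : ℝ)
    (Prim : ∀ m h : ℝ, 0 ≤ h → h ≤ r → u ≤ m - h → m + h ≤ v →
      2 * f m ≤ f (m + h) + f (m - h)) :
    ∀ n : ℕ, ∀ m h : ℝ, 0 ≤ h → h ≤ 2 ^ n * r → u ≤ m - h → m + h ≤ v →
      2 * f m ≤ f (m + h) + f (m - h) := by
  intro n
  induction n with
  | zero =>
    intro m h h0 hr hx hy
    exact Prim m h h0 (by simpa using hr) hx hy
  | succ n ih =>
    intro m h h0 hr hx hy
    by_cases hc : h ≤ 2 ^ n * r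
    · exact ih m h h0 hc hx hy
    · have hk0 : (0:ℝ) ≤ h / 2 := by linarith
      have hpow : (2:ℝ) ^ (n+1) * r = 2 * (2 ^ n * r) := by ring
      have hkr : h / 2 ≤ 2 ^ n * r := by
        rw [hpow] at hr; linarith
      have A := ih m (h/2) hk0 hkr (by linarith) (by linarith)
      have B := ih (m - h/2) (h/2) hk0 hkr (by linarith) (by linarith)
      have C := ih (m + h/2) (h/2) hk0 hkr (by linarith) (by linarith)
      have e1 : m + h/2 + h/2 = m + h := by ring
      have e2 : m + h/2 - h/2 = m := by ring
      have e3 : m - h/2 + h/2 = m := by ring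
      have e4 : m - h/2 - h/2 = m - h := by ring
      rw [e1, e2] at C
      rw [e3, e4] at B
      linarith

lemma jensen_aux_15 (I : Set ℝ) (hopen : IsOpen I) (hconv : Convex ℝ I)
    (f : ℝ → ℝ) (d : ℝ) (hd : d ≠ 0)
    (H : ∀ m h : ℝ, m + h ∈ I → m - h ∈ I → 2 * f m ≤ f (m + d * h) + f (m - d * h))
    (u v : ℝ) (hu : u ∈ I) (hv : v ∈ I) (huv : u ≤ v) :
    2 * f ((u + v) / 2) ≤ f u + f v := by
  obtain ⟨εu, hεu, hballu⟩ := Metric.isOpen_iff.mp hopen u hu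
  obtain ⟨εv, hεv, hballv⟩ := Metric.isOpen_iff.mp hopen v hv
  set ε : ℝ := min εu εv / 2 with hεdef
  have hε : 0 < ε := by
    have := lt_min hεu hεv
    
    positivity
  have hεu' : ε < εu := by
    have h1 := min_le_left εu εv
    have h2 := lt_min hεu hεv
    simp only [hεdef]
    linarith [min_le_left εu εv, lt_min hεu hεv]
  have hεv' : ε < εv := by
    simp only [hεdef]
    linarith [min_le_right εu εv, lt_min hεu hεv]
  have ha : u - ε ∈ I := by
    apply hballu
    rw [Metric.mem_ball, Real.dist_eq]
    have : u - ε - u = -ε := by ring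
    rw [this, abs_neg, abs_of_pos hε]
    exact hεu'
  have hb : v + ε ∈ I := by
    apply hballv
    rw [Metric.mem_ball, Real.dist_eq]
    have : v + ε - v = ε := by ring
    rw [this, abs_of_pos hε]
    exact hεv'
  have hIcc : Set.Icc (u - ε) (v + ε) ⊆ I := hconv.ordConnected.out ha hb
  have hdpos : 0 < |d| := abs_pos.mpr hd
  set r : ℝ := ε * |d| with hr
  have hr0 : 0 < r := by positivity
  have Prim : ∀ m h : ℝ, 0 ≤ h → h ≤ r → u ≤ m - h → m + h ≤ v →
      2 * f m ≤ f (m + h) + f (m - h) := by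
    intro m h h0 hhr hx hy
    have hm1 : u ≤ m := by linarith
    have hm2 : m ≤ v := by linarith
    set h' : ℝ := h / d with hh'
    have habs : |h'| ≤ ε := by
      rw [hh', abs_div, abs_of_nonneg h0, div_le_iff₀ hdpos]
      linarith [hhr]
    have hab := abs_le.mp habs
    have hin1 : m + h' ∈ I := by
      apply hIcc
      constructor <;> linarith [hab.1, hab.2]
    have hin2 : m - h' ∈ I := by
      apply hIcc
      constructor <;> linarith [hab.1, hab.2]
    have := H m h' hin1 hin2
    have hdh : d * h' = h := by
      rw [hh']; field_simp
    rwa [hdh] at this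
  obtain ⟨n, hn⟩ := pow_unbounded_of_one_lt ((v - u) / 2 / r) (one_lt_two (α := ℝ))
  have hn' : (v - u) / 2 ≤ 2 ^ n * r := by
    rw [div_lt_iff₀ hr0] at hn
    linarith
  have := key_ind_15 f u v r Prim n ((u + v) / 2) ((v - u) / 2)
    (by linarith) hn' (by linarith) (by linarith)
  have e1 : (u + v) / 2 + (v - u) / 2 = v := by ring
  have e2 : (u + v) / 2 - (v - u) / 2 = u := by ring
  rw [e1, e2] at this
  linarith

theorem stmt_15 (l1 l2 : ℝ) (h1 : l1 ∈ Set.Icc (0:ℝ) 1) (h2 : l2 ∈ Set.Icc (0:ℝ) 1)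
    (hsum : l1 + l2 = 1) :
    (l1 - l2 ≠ 0 ↔ IsUnit (Matrix.of ![![l1, l2], ![l2, l1]])) ∧
    (∀ (I : Set ℝ), I.Nonempty → IsOpen I → Convex ℝ I → ∀ f : ℝ → ℝ,
      l1 ≠ l2 →
      (∀ x1 ∈ I, ∀ x2 ∈ I, f ((x1 + x2) / 2) ≤
        (1 / 2) * (f (l1 * x1 + l2 * x2) + f (l2 * x1 + l1 * x2))) →
      ∀ u ∈ I, ∀ v ∈ I, f ((u + v) / 2) ≤ (f u + f v) / 2) := by
  constructor
  · have hdet : l1 * l1 - l2 * l2 = l1 - l2 := by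
      linear_combination (l1 - l2) * hsum
    rw [Matrix.isUnit_iff_isUnit_det, Matrix.det_fin_two_of, isUnit_iff_ne_zero, hdet]
  · intro I _ hopen hconv f hl hf u hu v hv
    have hd : l1 - l2 ≠ 0 := sub_ne_zero.mpr hl
    have H : ∀ m h : ℝ, m + h ∈ I → m - h ∈ I →
        2 * f m ≤ f (m + (l1 - l2) * h) + f (m - (l1 - l2) * h) := by
      intro m h hm1 hm2
      have := hf (m + h) hm1 (m - h) hm2
      have e0 : (m + h + (m - h)) / 2 = m := by ring
      have e1 : l1 * (m + h) + l2 * (m - h) = m + (l1 - l2) * h := by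
        linear_combination m * hsum
      have e2 : l2 * (m + h) + l1 * (m - h) = m - (l1 - l2) * h := by
        linear_combination m * hsum
      rw [e0, e1, e2] at this
      linarith
    rcases le_total u v with huv | huv
    · have := jensen_aux_15 I hopen hconv f (l1 - l2) hd H u v hu hv huv
      linarith
    · have := jensen_aux_15 I hopen hconv f (l1 - l2) hd H v u hv hu huv
      have e : (v + u) / 2 = (u + v) / 2 := by ring
      rw [e] at this
      linarith
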